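/- Let p be a natural number and define the sequence of real polynomials a_k by a_0(x) = x^p and a_{k+1}(x) = a_k''(x) + (d/dx)(x·a_k(x)). Let 0 < α < 1 and let κ, x be real numbers and t ≥ 0. Then the series ∑_{k=0}^∞ a_k(x) · κ^k · t^{k(1−α)} / Γ(k(1−α)+1) converges absolutely; that is, the function k ↦ |a_k(x) · κ^k · t^{k(1−α)} / Γ(k(1−α)+1)| is summable. -/

import Mathlib

open Real Polynomial

section aux
open Set Filter

lemma vim_gamma_interp (s β : ℝ) (hs : 0 < s) (hβ0 : 0 < β) (hβ1 : β < 1) :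
    Real.Gamma (s + 1) ≤ (s + β) ^ (1 - β) * Real.Gamma (s + β) := by
  have hsb : 0 < s + β := by linarith
  have hsb1 : 0 < s + β + 1 := by linarith
  have hG1 : 0 < Real.Gamma (s + β) := Real.Gamma_pos_of_pos hsb
  have hG2 : 0 < Real.Gamma (s + β + 1) := Real.Gamma_pos_of_pos hsb1
  have hGs1 : 0 < Real.Gamma (s + 1) := Real.Gamma_pos_of_pos (by linarith)
  have hconv := Real.convexOn_log_Gamma.2 (mem_Ioi.2 hsb) (mem_Ioi.2 hsb1)
    (le_of_lt hβ0) (by linarith : (0:ℝ) ≤ 1 - β) (by ring)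
  have hcomb : β • (s + β) + (1 - β) • (s + β + 1) = s + 1 := by
    simp [smul_eq_mul]; ring
  rw [hcomb] at hconv
  simp only [Function.comp, smul_eq_mul] at hconv
  have hadd : Real.Gamma (s + β + 1) = (s + β) * Real.Gamma (s + β) :=
    Real.Gamma_add_one (ne_of_gt hsb)
  rw [hadd, Real.log_mul (ne_of_gt hsb) (ne_of_gt hG1)] at hconv
  have hlog : Real.log (Real.Gamma (s + 1))
      ≤ Real.log ((s + β) ^ (1 - β) * Real.Gamma (s + β)) := by
    rw [Real.log_mul (by positivity) (ne_of_gt hG1), Real.log_rpow hsb]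
    nlinarith [hconv]
  calc Real.Gamma (s + 1) = Real.exp (Real.log (Real.Gamma (s + 1))) :=
        (Real.exp_log hGs1).symm
    _ ≤ Real.exp (Real.log ((s + β) ^ (1 - β) * Real.Gamma (s + β))) :=
        Real.exp_le_exp.2 hlog
    _ = (s + β) ^ (1 - β) * Real.Gamma (s + β) := Real.exp_log (by positivity)

lemma vim_summable_aux (β q : ℝ) (hβ0 : 0 < β) (hβ1 : β < 1) (hq : 1 ≤ q) :
    Summable (fun k : ℕ => q ^ k / Real.Gamma ((k : ℝ) * β + 1)) := by
  have hq0 : 0 < q := lt_of_lt_of_le one_pos hq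
  apply summable_of_ratio_norm_eventually_le (r := 1/2) (by norm_num)
  have htend : Tendsto (fun k : ℕ => ((k : ℝ) * β + 1) ^ β) atTop atTop := by
    apply (tendsto_rpow_atTop hβ0).comp
    apply tendsto_atTop_add_const_right
    exact tendsto_natCast_atTop_atTop.atTop_mul_const hβ0
  filter_upwards [htend.eventually_ge_atTop (4 * q)] with k hk
  have hs : (0:ℝ) < (k : ℝ) * β + 1 := by positivity
  have hG : 0 < Real.Gamma ((k : ℝ) * β + 1) := Real.Gamma_pos_of_pos hs
  have hinterp := vim_gamma_interp ((k : ℝ) * β + 1) β hs hβ0 hβ1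
  have hadd : Real.Gamma ((k : ℝ) * β + 1 + 1)
      = ((k : ℝ) * β + 1) * Real.Gamma ((k : ℝ) * β + 1) :=
    Real.Gamma_add_one (ne_of_gt hs)
  rw [hadd] at hinterp
  have hb1 : (1:ℝ) ≤ (k : ℝ) * β + 1 := by nlinarith [Nat.cast_nonneg (α := ℝ) k]
  have hrb : ((k : ℝ) * β + 1 + β) ^ (1 - β) ≤ 2 * ((k : ℝ) * β + 1) ^ (1 - β) := by
    calc ((k : ℝ) * β + 1 + β) ^ (1 - β) ≤ (2 * ((k : ℝ) * β + 1)) ^ (1 - β) := by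
          apply Real.rpow_le_rpow (by positivity) (by linarith) (by linarith)
      _ = 2 ^ (1 - β) * ((k : ℝ) * β + 1) ^ (1 - β) :=
          Real.mul_rpow (by norm_num) (by positivity)
      _ ≤ 2 * ((k : ℝ) * β + 1) ^ (1 - β) := by
          apply mul_le_mul_of_nonneg_right _ (by positivity)
          calc (2:ℝ) ^ (1 - β) ≤ 2 ^ (1:ℝ) :=
                Real.rpow_le_rpow_of_exponent_le (by norm_num) (by linarith)
            _ = 2 := by norm_num
  have hGsb : 0 < Real.Gamma ((k : ℝ) * β + 1 + β) := Real.Gamma_pos_of_pos (by positivity)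
  have hrple : ((k : ℝ) * β + 1) ^ (1 - β) * ((k : ℝ) * β + 1) ^ β = (k : ℝ) * β + 1 := by
    rw [← Real.rpow_add hs]; simp
  have hkey : 2 * q * Real.Gamma ((k : ℝ) * β + 1) ≤ Real.Gamma ((k : ℝ) * β + 1 + β) := by
    have h2 : ((k : ℝ) * β + 1) * Real.Gamma ((k : ℝ) * β + 1)
        ≤ 2 * ((k : ℝ) * β + 1) ^ (1 - β) * Real.Gamma ((k : ℝ) * β + 1 + β) := by
      calc ((k : ℝ) * β + 1) * Real.Gamma ((k : ℝ) * β + 1)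
          ≤ ((k : ℝ) * β + 1 + β) ^ (1 - β) * Real.Gamma ((k : ℝ) * β + 1 + β) := hinterp
        _ ≤ 2 * ((k : ℝ) * β + 1) ^ (1 - β) * Real.Gamma ((k : ℝ) * β + 1 + β) :=
            mul_le_mul_of_nonneg_right hrb hGsb.le
    have hpow : (0:ℝ) < ((k : ℝ) * β + 1) ^ (1 - β) := by positivity
    nlinarith [mul_le_mul_of_nonneg_right hk (mul_nonneg hpow.le hG.le), hG.le, hGsb.le]
  have hcast : ((k : ℝ) + 1) * β + 1 = (k : ℝ) * β + 1 + β := by ring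
  rw [Real.norm_eq_abs, Real.norm_eq_abs, abs_of_pos (by positivity),
    abs_of_pos (by positivity)]
  push_cast
  rw [hcast]
  calc q ^ (k + 1) / Real.Gamma ((k : ℝ) * β + 1 + β)
      ≤ q ^ (k + 1) / (2 * q * Real.Gamma ((k : ℝ) * β + 1)) :=
        div_le_div_of_nonneg_left (by positivity) (by positivity) hkey
    _ = 1 / 2 * (q ^ k / Real.Gamma ((k : ℝ) * β + 1)) := by
        rw [pow_succ]; field_simp

end aux

/-- Absolute convergence of the VIM power series solution: with `a_0(x) = x^p`,
`a_{k+1} = a_k'' + (x·a_k)'`, `0 < α < 1`, `κ, x` real, `t ≥ 0`, the series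
`∑_k a_k(x) κ^k t^{k(1−α)} / Γ(k(1−α)+1)` converges absolutely. -/
theorem vim_series_abs_convergent (p : ℕ) (a : ℕ → Polynomial ℝ)
    (ha0 : a 0 = Polynomial.X ^ p)
    (harec : ∀ k, a (k + 1) =
      Polynomial.derivative (Polynomial.derivative (a k)) +
        Polynomial.derivative (Polynomial.X * a k))
    (α κ x t : ℝ) (hα0 : 0 < α) (hα1 : α < 1) (ht : 0 ≤ t) :
    Summable (fun k : ℕ =>
      |(a k).eval x * κ ^ k * t ^ ((k : ℝ) * (1 - α)) /
        Real.Gamma ((k : ℝ) * (1 - α) + 1)|) := by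
  set β : ℝ := 1 - α with hβ
  have hβ0 : 0 < β := by simp [hβ]; linarith
  have hβ1 : β < 1 := by simp [hβ]; linarith
  obtain ⟨C, hCdef⟩ : ∃ C : ℝ, C = ((p : ℝ) + 1) * ((p : ℝ) + 3) := ⟨_, rfl⟩
  have hC1 : (1:ℝ) ≤ C := by
    have : (0:ℝ) ≤ (p : ℝ) := Nat.cast_nonneg p
    nlinarith
  have hC0 : (0:ℝ) < C := lt_of_lt_of_le one_pos hC1
  obtain ⟨M, hMdef⟩ : ∃ M : ℝ, M = max 1 |x| := ⟨_, rfl⟩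
  have hM1 : (1:ℝ) ≤ M := hMdef ▸ le_max_left _ _
  have hMx : |x| ≤ M := hMdef ▸ le_max_right _ _
  -- degrees stay ≤ p
  have hdeg : ∀ k, (a k).natDegree ≤ p := by
    intro k
    induction k with
    | zero => rw [ha0]; simpa using Polynomial.natDegree_X_pow_le p
    | succ k ih =>
      rw [harec k]
      refine le_trans (Polynomial.natDegree_add_le _ _) (max_le ?_ ?_)
      · have h1 := Polynomial.natDegree_derivative_le (Polynomial.derivative (a k))
        have h2 := Polynomial.natDegree_derivative_le (a k)
        omega
      · have h1 := Polynomial.natDegree_derivative_le (Polynomial.X * a k)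
        have h2 : (Polynomial.X * a k).natDegree ≤ 1 + (a k).natDegree :=
          le_trans (Polynomial.natDegree_mul_le)
            (by simpa using add_le_add_right (Polynomial.natDegree_X_le (R := ℝ)) _)
        omega
  -- coefficient bound
  have hcoeff : ∀ k i, |(a k).coeff i| ≤ C ^ k := by
    intro k
    induction k with
    | zero =>
      intro i
      rw [ha0, Polynomial.coeff_X_pow]
      split_ifs <;> simp
    | succ k ih =>
      intro i
      by_cases hi : i ≤ p
      · have hform : (a (k+1)).coeff i =
            (a k).coeff (i + 1 + 1) * ((((i:ℕ)+1 : ℕ):ℝ) + 1) * ((i:ℝ) + 1)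
              + (a k).coeff i * ((i:ℝ) + 1) := by
          rw [harec k, Polynomial.coeff_add, Polynomial.coeff_derivative,
            Polynomial.coeff_derivative, Polynomial.coeff_derivative,
            Polynomial.coeff_X_mul]
        rw [hform]
        have h1 := ih (i + 1 + 1)
        have h2 := ih i
        have hip : (i : ℝ) ≤ (p : ℝ) := Nat.cast_le.2 hi
        have hi0 : (0:ℝ) ≤ (i : ℝ) := Nat.cast_nonneg i
        have hCk : (0:ℝ) < C ^ k := pow_pos hC0 k
        have hc1 : ((((i:ℕ)+1 : ℕ):ℝ) + 1) = (i:ℝ) + 1 + 1 := by push_cast; ring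
        rw [hc1]
        calc |(a k).coeff (i + 1 + 1) * (((i:ℝ) + 1) + 1) * ((i:ℝ) + 1)
              + (a k).coeff i * ((i:ℝ) + 1)|
            ≤ |(a k).coeff (i + 1 + 1)| * (((i:ℝ) + 1) + 1) * ((i:ℝ) + 1)
              + |(a k).coeff i| * ((i:ℝ) + 1) := by
              refine le_trans (abs_add_le _ _) (add_le_add ?_ ?_)
              · rw [abs_mul, abs_mul, abs_of_nonneg (by linarith : (0:ℝ) ≤ ((i:ℝ)+1)+1),
                  abs_of_nonneg (by linarith : (0:ℝ) ≤ (i:ℝ)+1)]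
              · rw [abs_mul, abs_of_nonneg (by linarith : (0:ℝ) ≤ (i:ℝ)+1)]
          _ ≤ C ^ k * (((i:ℝ) + 1) + 1) * ((i:ℝ) + 1) + C ^ k * ((i:ℝ) + 1) :=
              add_le_add
                (mul_le_mul_of_nonneg_right
                  (mul_le_mul_of_nonneg_right h1 (by linarith)) (by linarith))
                (mul_le_mul_of_nonneg_right h2 (by linarith))
          _ = C ^ k * ((((i:ℝ) + 1) + 1) * ((i:ℝ) + 1) + ((i:ℝ) + 1)) := by ring
          _ ≤ C ^ k * C := by
              refine mul_le_mul_of_nonneg_left ?_ hCk.le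
              rw [hCdef]; nlinarith
          _ = C ^ (k + 1) := by rw [pow_succ]
      · push_neg at hi
        have : (a (k+1)).coeff i = 0 :=
          Polynomial.coeff_eq_zero_of_natDegree_lt (lt_of_le_of_lt (hdeg (k+1)) hi)
        rw [this]
        simpa using le_of_lt (pow_pos hC0 (k+1))
  -- evaluation bound
  have heval : ∀ k, |(a k).eval x| ≤ ((p:ℝ) + 1) * M ^ p * C ^ k := by
    intro k
    have hlt : (a k).natDegree < p + 1 := Nat.lt_succ_of_le (hdeg k)
    rw [Polynomial.eval_eq_sum_range' hlt]
    calc |∑ i ∈ Finset.range (p+1), (a k).coeff i * x ^ i|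
        ≤ ∑ i ∈ Finset.range (p+1), |(a k).coeff i * x ^ i| :=
          Finset.abs_sum_le_sum_abs _ _
      _ ≤ ∑ _i ∈ Finset.range (p+1), C ^ k * M ^ p := by
          refine Finset.sum_le_sum fun i hi => ?_
          rw [abs_mul, abs_pow]
          have hle : |x| ^ i ≤ M ^ p := by
            calc |x| ^ i ≤ M ^ i := pow_le_pow_left₀ (abs_nonneg x) hMx i
              _ ≤ M ^ p := pow_le_pow_right₀ hM1 (by
                  have := Finset.mem_range.1 hi; omega)
          exact mul_le_mul (hcoeff k i) hle (by positivity) (le_of_lt (pow_pos hC0 k))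
      _ = ((p:ℝ) + 1) * (C ^ k * M ^ p) := by
          rw [Finset.sum_const, Finset.card_range]; push_cast; ring
      _ = ((p:ℝ) + 1) * M ^ p * C ^ k := by ring
  -- majorant
  obtain ⟨q, hqdef⟩ : ∃ q : ℝ, q = C * |κ| * t ^ β + 1 := ⟨_, rfl⟩
  have hCκt : (0:ℝ) ≤ C * |κ| * t ^ β :=
    mul_nonneg (mul_nonneg hC0.le (abs_nonneg _)) (Real.rpow_nonneg ht β)
  have hq1 : (1:ℝ) ≤ q := by rw [hqdef]; linarith
  have hsum : Summable (fun k : ℕ =>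
      (((p:ℝ) + 1) * M ^ p) * (q ^ k / Real.Gamma ((k : ℝ) * β + 1))) :=
    (vim_summable_aux β q hβ0 hβ1 hq1).mul_left _
  refine Summable.of_nonneg_of_le (fun k => abs_nonneg _) (fun k => ?_) hsum
  have hG : 0 < Real.Gamma ((k : ℝ) * β + 1) := Real.Gamma_pos_of_pos (by positivity)
  have hrpow : t ^ ((k : ℝ) * β) = (t ^ β) ^ k := by
    rw [mul_comm, Real.rpow_mul ht, Real.rpow_natCast]
  have htβ : (0:ℝ) ≤ t ^ β := Real.rpow_nonneg ht β
  rw [abs_div, abs_of_pos hG, abs_mul, abs_mul, abs_pow,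
    abs_of_nonneg (Real.rpow_nonneg ht _), hrpow]
  have hnum : |(a k).eval x| * |κ| ^ k * (t ^ β) ^ k
      ≤ (((p:ℝ) + 1) * M ^ p) * q ^ k := by
    calc |(a k).eval x| * |κ| ^ k * (t ^ β) ^ k
        ≤ (((p:ℝ) + 1) * M ^ p * C ^ k) * |κ| ^ k * (t ^ β) ^ k := by
          have h1 : (0:ℝ) ≤ |κ| ^ k := by positivity
          have h2 : (0:ℝ) ≤ (t ^ β) ^ k := by positivity
          have := heval k
          nlinarith [mul_nonneg h1 h2]
      _ = (((p:ℝ) + 1) * M ^ p) * (C * |κ| * t ^ β) ^ k := by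
          rw [mul_pow, mul_pow]; ring
      _ ≤ (((p:ℝ) + 1) * M ^ p) * q ^ k := by
          have : (C * |κ| * t ^ β) ^ k ≤ q ^ k :=
            pow_le_pow_left₀ hCκt (by rw [hqdef]; linarith) k
          have hA : (0:ℝ) ≤ ((p:ℝ) + 1) * M ^ p :=
            mul_nonneg (by positivity) (pow_nonneg (by linarith) p)
          nlinarith
  calc |(a k).eval x| * |κ| ^ k * (t ^ β) ^ k / Real.Gamma ((k : ℝ) * β + 1)
      ≤ (((p:ℝ) + 1) * M ^ p) * q ^ k / Real.Gamma ((k : ℝ) * β + 1) := by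
        exact div_le_div_of_nonneg_right hnum hG.le
    _ = (((p:ℝ) + 1) * M ^ p) * (q ^ k / Real.Gamma ((k : ℝ) * β + 1)) := by
        ring
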